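/- arXiv:2605.26838 — 3 statements merged into one kernel-verified Lean document; each statement's English description precedes it below -/
import Mathlib

section
/- Let (A_k)_{k∈ℕ} be a process of nonnegative integrable random variables adapted to the filtration (ℱ_k)_{k∈ℕ}, let Θ > 0, and let T₀ = inf{k ≥ 0 : A_k = 0}. Assume that on {A_k = 0} one has A_{k+1} = 0 almost surely, that 𝔼[A_{k+1} − A_k | ℱ_k] ≤ −Θ almost everywhere on {A_k > 0} for every k, and that |A_{k+1} − A_k| ≤ C almost surely for a constant C < ∞. Then for every k ∈ ℕ, 𝔼[min(k, T₀)] ≤ 𝔼[A₀]/Θ. -/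
open MeasureTheory
open scoped ENNReal

/-- Truncated hitting-time bound: under absorption at `0`, uniform negative drift `-Θ` on
`{A_k > 0}`, and bounded increments, the truncated absorption time satisfies
`𝔼[min(k, T₀)] ≤ 𝔼[A₀] / Θ` for every `k` (with `min(k, T₀) = k` on `{T₀ = ∞}`). -/
theorem truncated_hitting_time_bound
    {Ω : Type*} {mΩ : MeasurableSpace Ω} {μ : Measure Ω} [IsProbabilityMeasure μ]
    (ℱ : Filtration ℕ mΩ)
    (A : ℕ → Ω → ℝ)
    (hadapted : Adapted ℱ A)
    (hint : ∀ k, Integrable (A k) μ)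
    (hpos : ∀ k ω, 0 ≤ A k ω)
    (T₀ : Ω → ℕ∞)
    (hT₀ : ∀ ω, T₀ ω = sInf ((fun k : ℕ => (k : ℕ∞)) '' {k : ℕ | A k ω = 0}))
    (Θ : ℝ) (hΘ : 0 < Θ)
    (habs : ∀ k, ∀ᵐ ω ∂μ, A k ω = 0 → A (k + 1) ω = 0)
    (hdrift : ∀ k, ∀ᵐ ω ∂μ, 0 < A k ω →
      (μ[(fun ω => A (k + 1) ω - A k ω) | ℱ k]) ω ≤ -Θ)
    (C : ℝ) (hbdd : ∀ k, ∀ᵐ ω ∂μ, |A (k + 1) ω - A k ω| ≤ C) :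
    ∀ k : ℕ, ∫ ω, ((min (k : ℕ∞) (T₀ ω)).toNat : ℝ) ∂μ ≤ (∫ ω, A 0 ω ∂μ) / Θ := by
  classical
  intro k
  -- the sets where the process is positive
  set s : ℕ → Set Ω := fun j => {ω | 0 < A j ω} with hs
  have hmeasF : ∀ j, MeasurableSet[ℱ j] (s j) := fun j =>
    measurableSet_lt measurable_const (hadapted j)
  have hmeas : ∀ j, MeasurableSet (s j) := fun j => ℱ.le j _ (hmeasF j)
  -- hereditary absorption (a.e.)
  have habs' : ∀ᵐ ω ∂μ, ∀ m n, m ≤ n → A m ω = 0 → A n ω = 0 := by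
    have h := ae_all_iff.2 habs
    filter_upwards [h] with ω hω m n hmn h0
    induction n with
    | zero => rw [← Nat.le_zero.1 hmn]; exact h0
    | succ n ih =>
      rcases Nat.lt_or_ge m (n+1) with h' | h'
      · exact hω n (ih (Nat.lt_succ_iff.1 h'))
      · have : m = n + 1 := le_antisymm hmn h'
        exact this ▸ h0
  -- key drift estimate
  have hstep : ∀ j, Θ * (μ (s j)).toReal ≤ (∫ ω, A j ω ∂μ) - ∫ ω, A (j+1) ω ∂μ := by
    intro j
    have hdiff : Integrable (fun ω => A (j+1) ω - A j ω) μ := (hint _).sub (hint _)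
    have h1 : ∫ ω, (A (j+1) ω - A j ω) ∂μ = ∫ ω in s j, (A (j+1) ω - A j ω) ∂μ := by
      rw [← integral_add_compl (hmeas j) hdiff]
      have h0 : ∫ ω in (s j)ᶜ, (A (j+1) ω - A j ω) ∂μ = 0 := by
        have hae : ∀ᵐ ω ∂μ.restrict (s j)ᶜ, A (j+1) ω - A j ω = 0 := by
          rw [ae_restrict_iff' (hmeas j).compl]
          filter_upwards [habs j] with ω hω hωc
          have h0 : A j ω = 0 := le_antisymm (not_lt.1 hωc) (hpos j ω)
          rw [h0, hω h0, sub_zero]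
        exact integral_eq_zero_of_ae hae
      rw [h0, add_zero]
    have h2 : ∫ ω in s j, (A (j+1) ω - A j ω) ∂μ
        = ∫ ω in s j, (μ[(fun ω => A (j + 1) ω - A j ω) | ℱ j]) ω ∂μ :=
      (setIntegral_condExp (ℱ.le j) hdiff (hmeasF j)).symm
    have h3 : ∫ ω in s j, (μ[(fun ω => A (j + 1) ω - A j ω) | ℱ j]) ω ∂μ
        ≤ ∫ _ω in s j, (-Θ) ∂μ := by
      refine setIntegral_mono_ae_restrict integrable_condExp.integrableOn
        (integrableOn_const (measure_lt_top _ _).ne) ?_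
      refine (ae_restrict_iff' (hmeas j)).2 ?_
      filter_upwards [hdrift j] with ω hω hωs using hω hωs
    have h4 : ∫ _ω in s j, (-Θ) ∂μ = -(Θ * (μ (s j)).toReal) := by
      rw [setIntegral_const, smul_eq_mul, measureReal_def]; ring
    have h5 : ∫ ω, (A (j+1) ω - A j ω) ∂μ = (∫ ω, A (j+1) ω ∂μ) - ∫ ω, A j ω ∂μ :=
      integral_sub (hint _) (hint _)
    nlinarith [h1, h2, h3, h4, h5]
  -- telescoping
  have htel : Θ * (∑ j ∈ Finset.range k, (μ (s j)).toReal) ≤ ∫ ω, A 0 ω ∂μ := by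
    have h := Finset.sum_le_sum (fun j (_ : j ∈ Finset.range k) => hstep j)
    rw [Finset.sum_range_sub' (fun j => ∫ ω, A j ω ∂μ)] at h
    have hk : 0 ≤ ∫ ω, A k ω ∂μ := integral_nonneg (hpos k)
    calc Θ * (∑ j ∈ Finset.range k, (μ (s j)).toReal)
        = ∑ j ∈ Finset.range k, Θ * (μ (s j)).toReal := Finset.mul_sum ..
      _ ≤ (∫ ω, A 0 ω ∂μ) - ∫ ω, A k ω ∂μ := h
      _ ≤ ∫ ω, A 0 ω ∂μ := by linarith
  -- identify the integrand with a sum of indicators, a.e.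
  have hrep : ∀ᵐ ω ∂μ, ((min (k : ℕ∞) (T₀ ω)).toNat : ℝ)
      = ∑ j ∈ Finset.range k, (s j).indicator (fun _ => (1:ℝ)) ω := by
    filter_upwards [habs'] with ω hω
    -- characterize `j < T₀ ω`
    have hchar : ∀ j : ℕ, ((j : ℕ∞) < T₀ ω ↔ 0 < A j ω) := by
      intro j
      rw [hT₀ ω]
      constructor
      · intro hlt
        rcases (hpos j ω).lt_or_eq with h | h
        · exact h
        · have hmem : (j : ℕ∞) ∈ (fun k : ℕ => (k : ℕ∞)) '' {k : ℕ | A k ω = 0} :=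
            ⟨j, h.symm, rfl⟩
          exact absurd (sInf_le hmem) (not_le.2 hlt)
      · intro hj
        have : ((j : ℕ∞) + 1) ≤ sInf ((fun k : ℕ => (k : ℕ∞)) '' {k : ℕ | A k ω = 0}) := by
          apply le_sInf
          rintro x ⟨m, hm, rfl⟩
          have hjm : j < m := by
            by_contra h'
            exact hj.ne' (hω m j (not_lt.1 h') hm)
          show (j : ℕ∞) + 1 ≤ (m : ℕ∞)
          exact_mod_cast Nat.succ_le_of_lt hjm
        calc (j : ℕ∞) < (j : ℕ∞) + 1 := by
              exact_mod_cast Nat.lt_succ_self j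
          _ ≤ _ := this
    -- pointwise counting identity
    have hcount : ∀ K : ℕ, ((min (K : ℕ∞) (T₀ ω)).toNat : ℝ)
        = ∑ j ∈ Finset.range K, (if (j : ℕ∞) < T₀ ω then (1:ℝ) else 0) := by
      intro K
      induction K with
      | zero => simp
      | succ K ih =>
        rw [Finset.sum_range_succ, ← ih]
        by_cases hK : (K : ℕ∞) < T₀ ω
        · have hc : ((K : ℕ∞) + 1 : ℕ∞) = ((K + 1 : ℕ) : ℕ∞) := by push_cast; ring
          have h1 : min (((K+1:ℕ)):ℕ∞) (T₀ ω) = (((K+1:ℕ)):ℕ∞) := by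
            rw [← hc]; exact min_eq_left (Order.add_one_le_of_lt hK)
          have h2 : min (K:ℕ∞) (T₀ ω) = (K:ℕ∞) := min_eq_left hK.le
          rw [if_pos hK, h1, h2, ENat.toNat_coe, ENat.toNat_coe]
          push_cast
          ring
        · have hle : T₀ ω ≤ (K : ℕ∞) := not_lt.1 hK
          have h1 : min ((K+1:ℕ) : ℕ∞) (T₀ ω) = T₀ ω := by
            apply min_eq_right
            exact hle.trans (by exact_mod_cast Nat.le_succ K)
          have h2 : min (K:ℕ∞) (T₀ ω) = T₀ ω := min_eq_right hle
          rw [if_neg hK, h1, h2, add_zero]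
    rw [hcount k]
    apply Finset.sum_congr rfl
    intro j _
    by_cases hj : 0 < A j ω
    · rw [if_pos ((hchar j).2 hj)]
      exact (Set.indicator_of_mem (show ω ∈ s j from hj) (fun _ => (1:ℝ))).symm
    · rw [if_neg (fun h => hj ((hchar j).1 h))]
      exact (Set.indicator_of_notMem (show ω ∉ s j from hj) (fun _ => (1:ℝ))).symm
  -- put everything together
  have hintg : ∫ ω, ((min (k : ℕ∞) (T₀ ω)).toNat : ℝ) ∂μ
      = ∑ j ∈ Finset.range k, (μ (s j)).toReal := by
    rw [integral_congr_ae hrep]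
    rw [integral_finset_sum]
    · refine Finset.sum_congr rfl fun j _ => ?_
      rw [integral_indicator_const _ (hmeas j)]
      simp [measureReal_def]
    · intro j _
      exact (integrable_const (1:ℝ)).indicator (hmeas j)
  rw [hintg, le_div_iff₀ hΘ]
  linarith [htel]
end

section
/- Let (A_k)_{k∈ℕ} be a process of nonnegative integer-valued integrable random variables adapted to the filtration (ℱ_k)_{k∈ℕ}, with deterministic initial value A₀ = a ∈ ℕ. Let Θ ∈ (0, 1] be a constant and assume the multiplicative drift condition: for every k, 𝔼[A_{k+1} | ℱ_k] ≤ (1 − Θ)·A_k almost everywhere on the event {A_k > 0}; assume also that on {A_k = 0}, A_{k+1} = 0 almost surely. Define T₀ = inf{k ≥ 0 : A_k = 0}. Then 𝔼[T₀] ≤ (1 + ln(max(1, a)))/Θ. -/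
open MeasureTheory
open scoped ENNReal


lemma drift_key (x q : ℝ) (hx : 1 ≤ x) (hq0 : 0 ≤ q) (hq1 : q < 1) :
    ∀ (m : ℕ), x * q ^ m ≤ 1 → (∀ j < m, 1 < x * q ^ j) →
      (m : ℝ) * (1 - q) + x * q ^ m ≤ 1 + Real.log x := by
  intro m hm hmin
  cases m with
  | zero =>
      simp only [pow_zero, mul_one, Nat.cast_zero, zero_mul, zero_add] at *
      have : x = 1 := le_antisymm hm hx
      simp [this]
  | succ j =>
      have hb : 1 < x * q ^ j := hmin j (Nat.lt_succ_self j)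
      by_cases hq : q = 0
      · subst hq
        have hj : j = 0 := by
          by_contra h
          rw [zero_pow h] at hb; nlinarith
        subst hj
        have hlog : Real.log x ≥ 0 := Real.log_nonneg hx
        norm_num
        exact hlog
      · have hqpos : 0 < q := lt_of_le_of_ne hq0 (Ne.symm hq)
        set b := x * q ^ j with hbdef
        have hb0 : 0 < b := lt_trans one_pos hb
        have hbq : b * q ≤ 1 := by
          have h : x * q ^ (j + 1) = b * q := by rw [hbdef, pow_succ]; ring
          linarith [h ▸ hm]
        have hx0 : 0 < x := lt_of_lt_of_le one_pos hx
        have hlogb : Real.log b = Real.log x + (j : ℝ) * Real.log q := by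
          rw [hbdef, Real.log_mul (ne_of_gt hx0) (by positivity), Real.log_pow]
        have hlq : Real.log q ≤ q - 1 := Real.log_le_sub_one_of_pos hqpos
        have h1b : 1 - b⁻¹ ≤ Real.log b := by
          have := Real.log_le_sub_one_of_pos (show (0:ℝ) < b⁻¹ by positivity)
          rw [Real.log_inv] at this
          linarith
        have hqb : q ≤ b⁻¹ := by
          rw [← one_div]
          rw [le_div_iff₀ hb0]
          linarith [mul_comm q b]
        have hB : q * (b - 1) ≤ Real.log b := by
          have h1 : q * (b - 1) ≤ b⁻¹ * (b - 1) :=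
            mul_le_mul_of_nonneg_right hqb (by linarith)
          have h2 : b⁻¹ * (b - 1) = 1 - b⁻¹ := by
            field_simp
          linarith
        have hA : (j : ℝ) * (1 - q) ≤ (j : ℝ) * (-(Real.log q)) :=
          mul_le_mul_of_nonneg_left (by linarith) (Nat.cast_nonneg j)
        have hgoal : x * q ^ (j + 1) = b * q := by rw [hbdef, pow_succ]; ring
        rw [hgoal]
        push_cast
        linarith [hA, hB, hlogb]


lemma enat_cast_eq_tsum (n : ℕ∞) :
    (n : ℝ≥0∞) = ∑' k : ℕ, Set.indicator {k' : ℕ | (k' : ℕ∞) < n} (fun _ => (1 : ℝ≥0∞)) k := by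
  cases n with
  | top =>
      have hs : {k' : ℕ | (k' : ℕ∞) < ⊤} = Set.univ := by
        ext k; simp [lt_top_iff_ne_top]
      rw [hs]
      simp only [Set.indicator_univ]
      rw [ENNReal.tsum_const_eq_top_of_ne_zero one_ne_zero]
      rfl
  | coe m =>
      have hs : {k' : ℕ | (k' : ℕ∞) < (m : ℕ∞)} = {k' : ℕ | k' < m} := by
        ext k; simp [Nat.cast_lt]
      rw [hs]
      rw [tsum_eq_sum (s := Finset.range m) (by
        intro k hk
        have : ¬ k < m := by simpa using hk
        simp [Set.indicator_of_notMem, this])]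
      have : ∀ k ∈ Finset.range m,
          Set.indicator {k' : ℕ | k' < m} (fun _ => (1 : ℝ≥0∞)) k = 1 := by
        intro k hk
        have : k < m := Finset.mem_range.mp hk
        simp [Set.indicator_of_mem, this]
      rw [Finset.sum_congr rfl this]
      simp



/-- Multiplicative-drift absorption bound: for a nonnegative integer-valued adapted process
with deterministic start `a`, multiplicative drift `𝔼[A_{k+1}|ℱ_k] ≤ (1-Θ)·A_k` on
`{A_k > 0}`, and absorption at `0`, the absorption time `T₀ = inf {k | A_k = 0}` satisfies
`𝔼[T₀] ≤ (1 + ln(max(1, a))) / Θ`. -/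
theorem multiplicative_drift_absorption
    {Ω : Type*} {mΩ : MeasurableSpace Ω} {μ : Measure Ω} [IsProbabilityMeasure μ]
    (ℱ : Filtration ℕ mΩ)
    (A : ℕ → Ω → ℝ)
    (hadapted : Adapted ℱ A)
    (hint : ∀ k, Integrable (A k) μ)
    (hnat : ∀ k ω, ∃ n : ℕ, A k ω = (n : ℝ))
    (a : ℕ) (hA0 : ∀ ω, A 0 ω = (a : ℝ))
    (Θ : ℝ) (hΘ : Θ ∈ Set.Ioc (0 : ℝ) 1)
    (hdrift : ∀ k, ∀ᵐ ω ∂μ, 0 < A k ω → (μ[A (k + 1) | ℱ k]) ω ≤ (1 - Θ) * A k ω)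
    (habs : ∀ k, ∀ᵐ ω ∂μ, A k ω = 0 → A (k + 1) ω = 0)
    (T₀ : Ω → ℕ∞)
    (hT₀ : ∀ ω, T₀ ω = sInf ((fun k : ℕ => (k : ℕ∞)) '' {k : ℕ | A k ω = 0})) :
    ∫⁻ ω, (T₀ ω : ℝ≥0∞) ∂μ ≤ ENNReal.ofReal ((1 + Real.log (max 1 (a : ℝ))) / Θ) := by
  obtain ⟨hΘ0, hΘ1⟩ := hΘ
  set q : ℝ := 1 - Θ with hqdef
  have hq0 : 0 ≤ q := by linarith
  have hq1 : q < 1 := by linarith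
  -- basic measurability and nonnegativity
  have hmA : ∀ k, Measurable (A k) :=
    fun k => (hadapted k).mono (ℱ.le k) le_rfl
  have hAnn : ∀ k ω, 0 ≤ A k ω := by
    intro k ω
    obtain ⟨n, hn⟩ := hnat k ω
    rw [hn]; positivity
  -- Step 1 : expectation decays geometrically
  have hE : ∀ k, ∫ ω, A k ω ∂μ ≤ (a : ℝ) * q ^ k := by
    intro k
    induction k with
    | zero =>
        have : (fun ω => A 0 ω) = fun _ => (a : ℝ) := funext hA0
        rw [this]
        simp
    | succ k ih =>
        have key : ∫ ω, A (k + 1) ω ∂μ ≤ q * ∫ ω, A k ω ∂μ := by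
          set s : Set Ω := {ω | A k ω = 0} with hsdef
          have hs' : MeasurableSet[ℱ k] s := (hadapted k) (measurableSet_singleton 0)
          have hs : MeasurableSet s := ℱ.le k _ hs'
          have h1 : ∫ ω in s, A (k + 1) ω ∂μ = 0 := by
            apply integral_eq_zero_of_ae
            exact (ae_restrict_iff' hs).2 ((habs k).mono fun ω h hω => h hω)
          have h2 : ∫ ω in sᶜ, (μ[A (k + 1)|ℱ k]) ω ∂μ = ∫ ω in sᶜ, A (k + 1) ω ∂μ :=
            setIntegral_condExp (ℱ.le k) (hint (k + 1)) hs'.compl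
          have h3 : ∫ ω in sᶜ, (μ[A (k + 1)|ℱ k]) ω ∂μ ≤ ∫ ω in sᶜ, q * A k ω ∂μ := by
            apply integral_mono_ae integrable_condExp.restrict (((hint k).const_mul q).restrict)
            refine (ae_restrict_iff' hs.compl).2 ((hdrift k).mono fun ω h hω => ?_)
            have hne : A k ω ≠ 0 := hω
            exact h (lt_of_le_of_ne (hAnn k ω) (Ne.symm hne))
          have h4 : ∫ ω in sᶜ, q * A k ω ∂μ ≤ ∫ ω, q * A k ω ∂μ := by
            apply setIntegral_le_integral ((hint k).const_mul q)
            exact Filter.Eventually.of_forall fun ω => mul_nonneg hq0 (hAnn k ω)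
          have h5 : ∫ ω, q * A k ω ∂μ = q * ∫ ω, A k ω ∂μ := integral_const_mul q _
          calc ∫ ω, A (k + 1) ω ∂μ
              = ∫ ω in s, A (k + 1) ω ∂μ + ∫ ω in sᶜ, A (k + 1) ω ∂μ :=
                (integral_add_compl hs (hint (k + 1))).symm
            _ = ∫ ω in sᶜ, A (k + 1) ω ∂μ := by rw [h1, zero_add]
            _ = ∫ ω in sᶜ, (μ[A (k + 1)|ℱ k]) ω ∂μ := h2.symm
            _ ≤ ∫ ω in sᶜ, q * A k ω ∂μ := h3
            _ ≤ q * ∫ ω, A k ω ∂μ := le_trans h4 (le_of_eq h5)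
        calc ∫ ω, A (k + 1) ω ∂μ ≤ q * ∫ ω, A k ω ∂μ := key
          _ ≤ q * ((a : ℝ) * q ^ k) := mul_le_mul_of_nonneg_left ih hq0
          _ = (a : ℝ) * q ^ (k + 1) := by ring
  -- Step 2 : identify the super-level sets of T₀
  have hTk : ∀ k : ℕ, {ω | (k : ℕ∞) < T₀ ω} = {ω | ∀ j ≤ k, A j ω ≠ 0} := by
    intro k
    ext ω
    simp only [Set.mem_setOf_eq, hT₀ ω]
    constructor
    · intro h j hj hA
      have h1 : sInf ((fun k : ℕ => (k : ℕ∞)) '' {k : ℕ | A k ω = 0}) ≤ (j : ℕ∞) :=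
        sInf_le ⟨j, hA, rfl⟩
      have h2 : (j : ℕ∞) ≤ (k : ℕ∞) := by exact_mod_cast hj
      exact absurd (lt_of_lt_of_le (lt_of_lt_of_le h h1) h2) (lt_irrefl _)
    · intro h
      rw [← ENat.add_one_le_iff (ENat.coe_ne_top k)]
      apply le_sInf
      rintro x ⟨j, hj, rfl⟩
      have hjk : ¬ j ≤ k := fun hle => h j hle hj
      have : k + 1 ≤ j := Nat.succ_le_of_lt (Nat.lt_of_not_le hjk)
      exact_mod_cast Nat.cast_le.mpr this
  have hSmeas : ∀ k : ℕ, MeasurableSet {ω | ∀ j ≤ k, A j ω ≠ 0} := by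
    intro k
    have : {ω | ∀ j ≤ k, A j ω ≠ 0} = ⋂ j, ⋂ (_ : j ≤ k), {ω | A j ω ≠ 0} := by
      ext ω; simp
    rw [this]
    exact MeasurableSet.iInter fun j => MeasurableSet.iInter fun _ =>
      (hmA j (measurableSet_singleton 0)).compl
  -- Step 3 : layer cake
  have hlayer : ∫⁻ ω, (T₀ ω : ℝ≥0∞) ∂μ = ∑' k : ℕ, μ {ω | ∀ j ≤ k, A j ω ≠ 0} := by
    have hpt : ∀ ω, (T₀ ω : ℝ≥0∞) =
        ∑' k : ℕ, Set.indicator {ω' | ∀ j ≤ k, A j ω' ≠ 0} (fun _ => (1 : ℝ≥0∞)) ω := by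
      intro ω
      rw [enat_cast_eq_tsum (T₀ ω)]
      congr 1
      funext k
      have : k ∈ {k' : ℕ | (k' : ℕ∞) < T₀ ω} ↔ ω ∈ {ω' | ∀ j ≤ k, A j ω' ≠ 0} := by
        rw [← hTk k]; rfl
      by_cases hk : ω ∈ {ω' | ∀ j ≤ k, A j ω' ≠ 0}
      · rw [Set.indicator_of_mem hk, Set.indicator_of_mem (this.mpr hk)]
      · rw [Set.indicator_of_notMem hk, Set.indicator_of_notMem (fun hc => hk (this.mp hc))]
    calc ∫⁻ ω, (T₀ ω : ℝ≥0∞) ∂μ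
        = ∫⁻ ω, ∑' k : ℕ, Set.indicator {ω' | ∀ j ≤ k, A j ω' ≠ 0} (fun _ => (1 : ℝ≥0∞)) ω ∂μ := by
          apply lintegral_congr hpt
      _ = ∑' k : ℕ, ∫⁻ ω, Set.indicator {ω' | ∀ j ≤ k, A j ω' ≠ 0} (fun _ => (1 : ℝ≥0∞)) ω ∂μ :=
          lintegral_tsum fun k => ((measurable_one.indicator (hSmeas k)).aemeasurable)
      _ = ∑' k : ℕ, μ {ω | ∀ j ≤ k, A j ω ≠ 0} := by
          congr 1
          funext k
          rw [lintegral_indicator (hSmeas k), setLIntegral_one]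
  -- Step 4 : tail bounds
  have htail : ∀ k : ℕ, μ {ω | ∀ j ≤ k, A j ω ≠ 0} ≤ min 1 (ENNReal.ofReal ((a : ℝ) * q ^ k)) := by
    intro k
    refine le_min (prob_le_one) ?_
    have hsub : {ω | ∀ j ≤ k, A j ω ≠ 0} ⊆ {ω | 1 ≤ ENNReal.ofReal (A k ω)} := by
      intro ω hω
      have hne : A k ω ≠ 0 := hω k le_rfl
      obtain ⟨n, hn⟩ := hnat k ω
      have hn0 : n ≠ 0 := by rintro rfl; simp at hn; exact hne hn
      have h1 : (1 : ℝ) ≤ A k ω := by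
        rw [hn]; exact_mod_cast Nat.one_le_iff_ne_zero.mpr hn0
      simpa using ENNReal.one_le_ofReal.mpr h1
    calc μ {ω | ∀ j ≤ k, A j ω ≠ 0} ≤ μ {ω | 1 ≤ ENNReal.ofReal (A k ω)} := measure_mono hsub
      _ = 1 * μ {ω | 1 ≤ ENNReal.ofReal (A k ω)} := (one_mul _).symm
      _ ≤ ∫⁻ ω, ENNReal.ofReal (A k ω) ∂μ :=
          mul_meas_ge_le_lintegral₀ ((hmA k).ennreal_ofReal.aemeasurable) 1
      _ = ENNReal.ofReal (∫ ω, A k ω ∂μ) :=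
          (ofReal_integral_eq_lintegral_ofReal (hint k)
            (Filter.Eventually.of_forall (hAnn k))).symm
      _ ≤ ENNReal.ofReal ((a : ℝ) * q ^ k) := ENNReal.ofReal_le_ofReal (hE k)
  -- Step 5 : main case split on a
  rcases Nat.eq_zero_or_pos a with ha0 | ha
  · -- a = 0 : T₀ = 0 everywhere
    subst ha0
    have hT0 : ∀ ω, T₀ ω = 0 := by
      intro ω
      rw [hT₀ ω]
      refine le_antisymm ?_ zero_le
      exact sInf_le ⟨0, by simpa using hA0 ω, rfl⟩
    simp only [hT0]
    simp
  · -- a ≥ 1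
    have hx : (1 : ℝ) ≤ (a : ℝ) := by exact_mod_cast ha
    set x : ℝ := (a : ℝ) with hxdef
    have hmax : max 1 (a : ℝ) = x := max_eq_right hx
    rw [hmax]
    -- the splitting index
    have hex : ∃ m : ℕ, x * q ^ m ≤ 1 := by
      rcases eq_or_lt_of_le hq0 with hq | hq
      · exact ⟨1, by rw [← hq]; norm_num⟩
      · obtain ⟨n, hn⟩ := exists_pow_lt_of_lt_one (show (0 : ℝ) < 1 / x by positivity) hq1
        refine ⟨n, ?_⟩
        have hx0 : (0 : ℝ) < x := by linarith
        calc x * q ^ n ≤ x * (1 / x) := by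
              apply mul_le_mul_of_nonneg_left (le_of_lt hn) (le_of_lt hx0)
          _ = 1 := by field_simp
    obtain ⟨m, hm, hmin⟩ : ∃ m : ℕ, x * q ^ m ≤ 1 ∧ ∀ j < m, 1 < x * q ^ j :=
      ⟨Nat.find hex, Nat.find_spec hex, fun j hj => not_le.mp (Nat.find_min hex hj)⟩
    have hkey : (m : ℝ) * Θ + x * q ^ m ≤ 1 + Real.log x := by
      have := drift_key x q hx hq0 hq1 m hm hmin
      have hsub : (1 : ℝ) - q = Θ := by rw [hqdef]; ring
      rwa [hsub] at this
    -- sum the tail bounds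
    rw [hlayer]
    have hsum : ∑' k : ℕ, μ {ω | ∀ j ≤ k, A j ω ≠ 0} ≤
        ∑' k : ℕ, min 1 (ENNReal.ofReal (x * q ^ k)) := ENNReal.tsum_le_tsum htail
    refine le_trans hsum ?_
    set f : ℕ → ℝ≥0∞ := fun k => min 1 (ENNReal.ofReal (x * q ^ k)) with hfdef
    rw [← Summable.sum_add_tsum_nat_add' (f := f) (k := m) ENNReal.summable]
    have hhead : ∑ i ∈ Finset.range m, f i ≤ (m : ℝ≥0∞) := by
      calc ∑ i ∈ Finset.range m, f i ≤ ∑ i ∈ Finset.range m, 1 :=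
            Finset.sum_le_sum fun i _ => min_le_left _ _
        _ = (m : ℝ≥0∞) := by simp
    have htail2 : ∑' i : ℕ, f (i + m) ≤ ENNReal.ofReal (x * q ^ m * Θ⁻¹) := by
      have hterm : ∀ i : ℕ, f (i + m) ≤ ENNReal.ofReal (x * q ^ m) * (ENNReal.ofReal q) ^ i := by
        intro i
        have : x * q ^ (i + m) = (x * q ^ m) * q ^ i := by rw [pow_add]; ring
        calc f (i + m) ≤ ENNReal.ofReal (x * q ^ (i + m)) := min_le_right _ _
          _ = ENNReal.ofReal (x * q ^ m) * (ENNReal.ofReal q) ^ i := by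
              rw [this, ENNReal.ofReal_mul (by positivity), ENNReal.ofReal_pow hq0]
      calc ∑' i : ℕ, f (i + m)
          ≤ ∑' i : ℕ, ENNReal.ofReal (x * q ^ m) * (ENNReal.ofReal q) ^ i :=
            ENNReal.tsum_le_tsum hterm
        _ = ENNReal.ofReal (x * q ^ m) * (1 - ENNReal.ofReal q)⁻¹ := by
            rw [ENNReal.tsum_mul_left, ENNReal.tsum_geometric]
        _ = ENNReal.ofReal (x * q ^ m) * ENNReal.ofReal Θ⁻¹ := by
            have h1 : (1 : ℝ≥0∞) - ENNReal.ofReal q = ENNReal.ofReal Θ := by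
              rw [← ENNReal.ofReal_one, ← ENNReal.ofReal_sub _ hq0]
              congr 1
              rw [hqdef]; ring
            rw [h1, ENNReal.ofReal_inv_of_pos hΘ0]
        _ = ENNReal.ofReal (x * q ^ m * Θ⁻¹) := by
            rw [← ENNReal.ofReal_mul (by positivity)]
    calc ∑ i ∈ Finset.range m, f i + ∑' i : ℕ, f (i + m)
        ≤ (m : ℝ≥0∞) + ENNReal.ofReal (x * q ^ m * Θ⁻¹) := add_le_add hhead htail2
      _ = ENNReal.ofReal ((m : ℝ) + x * q ^ m * Θ⁻¹) := by
          rw [ENNReal.ofReal_add (Nat.cast_nonneg m) (by positivity), ENNReal.ofReal_natCast]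
      _ ≤ ENNReal.ofReal ((1 + Real.log x) / Θ) := by
          apply ENNReal.ofReal_le_ofReal
          rw [div_eq_mul_inv]
          have h2 : (m : ℝ) + x * q ^ m * Θ⁻¹ = ((m : ℝ) * Θ + x * q ^ m) * Θ⁻¹ := by
            field_simp
          rw [h2]
          exact mul_le_mul_of_nonneg_right hkey (by positivity)
end

section
/- Let (A_k)_{k∈ℕ} be a process of nonnegative integer-valued integrable random variables adapted to the filtration (ℱ_k)_{k∈ℕ}, with deterministic initial value A₀ = a ∈ ℕ, and assume A_{k+1} ≤ A_k almost surely for all k (the attacker count is nonincreasing) and that increments are bounded: |A_{k+1} − A_k| ≤ C almost surely for a constant C < ∞. Let D ≥ 1 be an integer and Θ ∈ (0, 1]. Assume: (i) on {A_k = 0}, A_{k+1} = 0 almost surely; (ii) additive drift in the saturated regime: 𝔼[A_{k+1} | ℱ_k] ≤ A_k − Θ·D almost everywhere on {A_k ≥ D}, for every k; (iii) multiplicative drift in the sub-capacity regime: 𝔼[A_{k+1} | ℱ_k] ≤ (1 − Θ)·A_k almost everywhere on {0 < A_k < D}, for every k. Then the absorption time T₀ = inf{k ≥ 0 : A_k =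 0} satisfies 𝔼[T₀] ≤ max(a − D, 0)/(Θ·D) + (1 + ln(min(D, max(1, a))))/Θ. -/
open MeasureTheory
open scoped ENNReal

/-- The mixed linear–geometric potential function. -/
noncomputable def mlgP (D z : ℝ) : ℝ :=
  min z 1 + Real.log (max 1 (min z D)) + max (z - D) 0 / D

/-- Decomposition identity for the clamp pieces. -/
lemma mlg_decomp (D z : ℝ) (hD : 1 ≤ D) :
    min z 1 + (max 1 (min z D) - 1) + max (z - D) 0 = z := by
  rcases le_total z 1 with h1 | h1
  · have hzD : z ≤ D := h1.trans hD
    rw [min_eq_left h1, min_eq_left hzD, max_eq_left h1, max_eq_right (by linarith : z - D ≤ 0)]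
    ring
  · rcases le_total z D with h2 | h2
    · rw [min_eq_right h1, min_eq_left h2, max_eq_right h1,
        max_eq_right (by linarith : z - D ≤ 0)]
      ring
    · rw [min_eq_right h1, min_eq_right h2, max_eq_right hD,
        max_eq_left (by linarith : (0:ℝ) ≤ z - D)]
      ring

/-- Tangent-line (concavity) inequality for the potential. -/
lemma mlg_key (D : ℝ) (hD : 1 ≤ D) (x y : ℝ) :
    mlgP D y ≤ mlgP D x + (y - x) / max 1 (min x D) := by
  unfold mlgP
  set c := max 1 (min x D) with hc
  set d := max 1 (min y D) with hd
  have hc1 : (1:ℝ) ≤ c := le_max_left _ _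
  have hc0 : (0:ℝ) < c := lt_of_lt_of_le one_pos hc1
  have hd1 : (1:ℝ) ≤ d := le_max_left _ _
  have hd0 : (0:ℝ) < d := lt_of_lt_of_le one_pos hd1
  have hcD : c ≤ D := max_le hD (min_le_right _ _)
  have hD0 : (0:ℝ) < D := lt_of_lt_of_le one_pos hD
  have h1 : min y 1 - min x 1 ≤ (min y 1 - min x 1) / c := by
    rcases le_or_gt (min y 1) (min x 1) with h | h
    · rw [le_div_iff₀ hc0]
      nlinarith
    · have hx1 : x < 1 := by
        by_contra hx
        push_neg at hx
        rw [min_eq_right hx] at h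
        exact absurd (min_le_right y 1) (not_le.mpr h)
      have hceq : c = 1 := by rw [hc, min_eq_left (hx1.le.trans hD), max_eq_left hx1.le]
      rw [hceq, div_one]
  have h2 : Real.log d - Real.log c ≤ (d - c) / c := by
    have hlog := Real.log_le_sub_one_of_pos (div_pos hd0 hc0)
    rw [Real.log_div hd0.ne' hc0.ne'] at hlog
    have heq : d / c - 1 = (d - c) / c := by field_simp
    linarith
  have h3 : (max (y - D) 0 - max (x - D) 0) / D ≤ (max (y - D) 0 - max (x - D) 0) / c := by
    rcases le_or_gt (max (x - D) 0) (max (y - D) 0) with h | h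
    · exact div_le_div_of_nonneg_left (by linarith) hc0 hcD
    · have hxD : D < x := by
        by_contra hx
        push_neg at hx
        rw [max_eq_right (by linarith : x - D ≤ 0)] at h
        exact absurd (le_max_right (y - D) 0) (not_le.mpr h)
      have hceq : c = D := by rw [hc, min_eq_right hxD.le, max_eq_right hD]
      rw [hceq]
  have hdec : (min y 1 - min x 1) + (d - c) + (max (y - D) 0 - max (x - D) 0) = y - x := by
    have hy := mlg_decomp D y hD
    have hx := mlg_decomp D x hD
    rw [← hd] at hy
    rw [← hc] at hx
    linarith
  have hsum : (min y 1 - min x 1) / c + (d - c) / c + (max (y - D) 0 - max (x - D) 0) / c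
      = (y - x) / c := by
    rw [← add_div, ← add_div, hdec]
  have hsub : max (y - D) 0 / D - max (x - D) 0 / D = (max (y - D) 0 - max (x - D) 0) / D :=
    (sub_div _ _ _).symm
  linarith

lemma mlg_P_nonneg (D z : ℝ) (hD : 1 ≤ D) (hz : 0 ≤ z) : 0 ≤ mlgP D z := by
  have h1 : 0 ≤ min z 1 := le_min hz zero_le_one
  have h2 : 0 ≤ Real.log (max 1 (min z D)) := Real.log_nonneg (le_max_left _ _)
  have h3 : 0 ≤ max (z - D) 0 / D := div_nonneg (le_max_right _ _) (by linarith)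
  unfold mlgP
  linarith

lemma mlg_P_le (D z : ℝ) (hD : 1 ≤ D) : mlgP D z ≤ z := by
  have hkey := mlg_key D hD 0 z
  unfold mlgP at hkey ⊢
  have e2 : min (0:ℝ) D = 0 := min_eq_left (by linarith)
  have e3 : max ((0:ℝ) - D) 0 = 0 := max_eq_right (by linarith)
  rw [e2, e3, max_eq_left zero_le_one, min_eq_left zero_le_one, Real.log_one,
    zero_div, div_one, sub_zero] at hkey
  linarith

lemma mlg_enat_coe (n : ℕ∞) :
    (n : ℝ≥0∞) = ∑' k : ℕ, (if (k : ℕ∞) < n then (1:ℝ≥0∞) else 0) := by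
  induction n using ENat.recTopCoe with
  | top =>
    have h : ∀ k : ℕ, (if (k : ℕ∞) < ⊤ then (1:ℝ≥0∞) else 0) = 1 := fun k =>
      if_pos (lt_top_iff_ne_top.mpr (ENat.coe_ne_top k))
    simp only [h]
    rw [ENat.toENNReal_top, ENNReal.tsum_const_eq_top_of_ne_zero one_ne_zero]
  | coe m =>
    rw [tsum_eq_sum (s := Finset.range m)
      (fun k hk => if_neg (by
        simp only [Finset.mem_range, not_lt] at hk
        exact not_lt.mpr (by exact_mod_cast hk)))]
    have h : ∀ k ∈ Finset.range m, (if (k : ℕ∞) < (m : ℕ∞) then (1:ℝ≥0∞) else 0) = 1 :=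
      fun k hk => if_pos (by exact_mod_cast Finset.mem_range.mp hk)
    rw [Finset.sum_congr rfl h, Finset.sum_const, Finset.card_range, ENat.toENNReal_coe]
    simp

/-- Explicit mixed linear–geometric absorption bound: for a nonnegative integer-valued,
nonincreasing adapted process with deterministic start `a`, bounded increments, absorption
at `0`, additive drift `𝔼[A_{k+1}|ℱ_k] ≤ A_k - Θ·D` on `{A_k ≥ D}`, and multiplicative
drift `𝔼[A_{k+1}|ℱ_k] ≤ (1-Θ)·A_k` on `{0 < A_k < D}`, the absorption time satisfies
`𝔼[T₀] ≤ max(a - D, 0)/(Θ·D) + (1 + ln(min(D, max(1, a))))/Θ`. -/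
theorem mixed_linear_geometric_absorption_bound
    {Ω : Type*} {mΩ : MeasurableSpace Ω} {μ : Measure Ω} [IsProbabilityMeasure μ]
    (ℱ : Filtration ℕ mΩ)
    (A : ℕ → Ω → ℝ)
    (hadapted : Adapted ℱ A)
    (hint : ∀ k, Integrable (A k) μ)
    (hnat : ∀ k ω, ∃ n : ℕ, A k ω = (n : ℝ))
    (a : ℕ) (hA0 : ∀ ω, A 0 ω = (a : ℝ))
    (hmono : ∀ k, ∀ᵐ ω ∂μ, A (k + 1) ω ≤ A k ω)
    (C : ℝ) (hbdd : ∀ k, ∀ᵐ ω ∂μ, |A (k + 1) ω - A k ω| ≤ C)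
    (D : ℕ) (hD : 1 ≤ D)
    (Θ : ℝ) (hΘ : Θ ∈ Set.Ioc (0 : ℝ) 1)
    (habs : ∀ k, ∀ᵐ ω ∂μ, A k ω = 0 → A (k + 1) ω = 0)
    (hdriftadd : ∀ k, ∀ᵐ ω ∂μ, (D : ℝ) ≤ A k ω →
      (μ[A (k + 1) | ℱ k]) ω ≤ A k ω - Θ * (D : ℝ))
    (hdriftmul : ∀ k, ∀ᵐ ω ∂μ, 0 < A k ω → A k ω < (D : ℝ) →
      (μ[A (k + 1) | ℱ k]) ω ≤ (1 - Θ) * A k ω)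
    (T₀ : Ω → ℕ∞)
    (hT₀ : ∀ ω, T₀ ω = sInf ((fun k : ℕ => (k : ℕ∞)) '' {k : ℕ | A k ω = 0})) :
    ∫⁻ ω, (T₀ ω : ℝ≥0∞) ∂μ ≤
      ENNReal.ofReal (max ((a : ℝ) - (D : ℝ)) 0 / (Θ * (D : ℝ)) +
        (1 + Real.log (min (D : ℝ) (max 1 (a : ℝ)))) / Θ) := by
  obtain ⟨hΘ0, hΘ1⟩ := hΘ
  have hD1 : (1:ℝ) ≤ (D:ℝ) := by exact_mod_cast hD
  have hD0 : (0:ℝ) < (D:ℝ) := by linarith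
  -- basic facts
  have hA_nonneg : ∀ k ω, 0 ≤ A k ω := by
    intro k ω
    obtain ⟨n, hn⟩ := hnat k ω
    rw [hn]
    positivity
  have hAmeas : ∀ k, Measurable (A k) := fun k => (hadapted k).mono (ℱ.le k) le_rfl
  have hSmeas : ∀ k, MeasurableSet {ω | 0 < A k ω} :=
    fun k => measurableSet_lt measurable_const (hAmeas k)
  have hccont : Continuous (fun z : ℝ => max 1 (min z (D:ℝ))) :=
    continuous_const.max (continuous_id.min continuous_const)
  have hcpos : ∀ z : ℝ, (0:ℝ) < max 1 (min z (D:ℝ)) :=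
    fun z => lt_of_lt_of_le one_pos (le_max_left _ _)
  have hPcont : Continuous (mlgP (D:ℝ)) := by
    unfold mlgP
    exact ((continuous_id.min continuous_const).add
      (hccont.log fun z => (hcpos z).ne')).add
      (((continuous_id.sub continuous_const).max continuous_const).div_const _)
  have hPint : ∀ k, Integrable (fun ω => mlgP (D:ℝ) (A k ω)) μ := by
    intro k
    refine (hint k).mono (hPcont.comp_aestronglyMeasurable (hint k).aestronglyMeasurable) ?_
    refine Filter.Eventually.of_forall fun ω => ?_
    rw [Real.norm_eq_abs, Real.norm_eq_abs,
      abs_of_nonneg (mlg_P_nonneg _ _ hD1 (hA_nonneg k ω)), abs_of_nonneg (hA_nonneg k ω)]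
    exact mlg_P_le _ _ hD1
  -- the one-step drop
  have step : ∀ k, Θ * (μ {ω | 0 < A k ω}).toReal ≤
      (∫ ω, mlgP (D:ℝ) (A k ω) ∂μ) - ∫ ω, mlgP (D:ℝ) (A (k+1) ω) ∂μ := by
    intro k
    set W : Ω → ℝ := fun ω => (max 1 (min (A k ω) (D:ℝ)))⁻¹ with hWdef
    have hWsm : StronglyMeasurable[ℱ k] W :=
      (hccont.inv₀ fun z => (hcpos z).ne').comp_stronglyMeasurable (hadapted k).stronglyMeasurable
    have hWsm0 : AEStronglyMeasurable W μ := (hWsm.mono (ℱ.le k)).aestronglyMeasurable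
    have hWpos : ∀ ω, 0 < W ω := fun ω => inv_pos.mpr (hcpos _)
    have hWle : ∀ ω, W ω ≤ 1 := fun ω => inv_le_one_of_one_le₀ (le_max_left _ _)
    have hWbd : ∃ Cw : ℝ, ∀ ω, ‖W ω‖ ≤ Cw :=
      ⟨1, fun ω => by rw [Real.norm_eq_abs, abs_of_pos (hWpos ω)]; exact hWle ω⟩
    have hWA1 : Integrable (fun ω => W ω * A (k+1) ω) μ := (hint (k+1)).bdd_mul hWsm0 (Filter.Eventually.of_forall hWbd.choose_spec)
    have hWA0 : Integrable (fun ω => W ω * A k ω) μ := (hint k).bdd_mul hWsm0 (Filter.Eventually.of_forall hWbd.choose_spec)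
    have hWE : Integrable (fun ω => W ω * (μ[A (k+1)|ℱ k]) ω) μ :=
      integrable_condExp.bdd_mul hWsm0 (Filter.Eventually.of_forall hWbd.choose_spec)
    have hpt : ∀ ω, mlgP (D:ℝ) (A (k+1) ω) ≤
        mlgP (D:ℝ) (A k ω) - W ω * A k ω + W ω * A (k+1) ω := by
      intro ω
      have h := mlg_key (D:ℝ) hD1 (A k ω) (A (k+1) ω)
      have hrw : (A (k+1) ω - A k ω) / max 1 (min (A k ω) (D:ℝ))
          = W ω * A (k+1) ω - W ω * A k ω := by
        simp only [hWdef]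
        rw [div_eq_mul_inv]
        ring
      linarith
    have h1 : ∫ ω, mlgP (D:ℝ) (A (k+1) ω) ∂μ ≤
        ∫ ω, (mlgP (D:ℝ) (A k ω) - W ω * A k ω + W ω * A (k+1) ω) ∂μ :=
      integral_mono (hPint (k+1)) (((hPint k).sub hWA0).add hWA1) hpt
    have h2 : ∫ ω, (mlgP (D:ℝ) (A k ω) - W ω * A k ω + W ω * A (k+1) ω) ∂μ
        = (∫ ω, (mlgP (D:ℝ) (A k ω) - W ω * A k ω) ∂μ) + ∫ ω, W ω * A (k+1) ω ∂μ :=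
      integral_add ((hPint k).sub hWA0) hWA1
    have h3 : ∫ ω, W ω * A (k+1) ω ∂μ = ∫ ω, W ω * (μ[A (k+1)|ℱ k]) ω ∂μ := by
      have hmul := condExp_mul_of_stronglyMeasurable_left hWsm
        (show Integrable (W * A (k+1)) μ from hWA1) (hint (k+1))
      calc ∫ ω, W ω * A (k+1) ω ∂μ = ∫ ω, (W * A (k+1)) ω ∂μ := rfl
        _ = ∫ ω, (μ[W * A (k+1)|ℱ k]) ω ∂μ := (integral_condExp (ℱ.le k)).symm
        _ = ∫ ω, (W * μ[A (k+1)|ℱ k]) ω ∂μ := integral_congr_ae hmul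
        _ = ∫ ω, W ω * (μ[A (k+1)|ℱ k]) ω ∂μ := rfl
    have hEmono : ∀ᵐ ω ∂μ, (μ[A (k+1)|ℱ k]) ω ≤ A k ω := by
      have hc := condExp_mono (μ := μ) (m := ℱ k) (hint (k+1)) (hint k) (hmono k)
      rw [condExp_of_stronglyMeasurable (ℱ.le k) (hadapted k).stronglyMeasurable (hint k)] at hc
      exact hc
    have hae : ∀ᵐ ω ∂μ, mlgP (D:ℝ) (A k ω) - W ω * A k ω + W ω * (μ[A (k+1)|ℱ k]) ω
        ≤ mlgP (D:ℝ) (A k ω) - Set.indicator {ω' | 0 < A k ω'} (fun _ => Θ) ω := by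
      filter_upwards [hEmono, hdriftadd k, hdriftmul k] with ω hE hadd hmul'
      rcases eq_or_lt_of_le (hA_nonneg k ω) with h0 | h0
      · have hni : ω ∉ {ω' | 0 < A k ω'} := by simp [← h0]
        rw [Set.indicator_of_notMem hni]
        have hle : W ω * (μ[A (k+1)|ℱ k]) ω ≤ W ω * A k ω :=
          mul_le_mul_of_nonneg_left hE (hWpos ω).le
        linarith
      · have hmem : ω ∈ {ω' | 0 < A k ω'} := h0
        rw [Set.indicator_of_mem hmem]
        rcases lt_or_ge (A k ω) (D:ℝ) with hcase | hcase
        · have hA1 : (1:ℝ) ≤ A k ω := by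
            obtain ⟨n, hn⟩ := hnat k ω
            have hn0 : 0 < n := by exact_mod_cast hn ▸ h0
            rw [hn]
            exact_mod_cast hn0
          have hcA : max 1 (min (A k ω) (D:ℝ)) = A k ω := by
            rw [min_eq_left hcase.le, max_eq_right hA1]
          have hWA : W ω * A k ω = 1 := by
            simp only [hWdef]
            rw [hcA]
            exact inv_mul_cancel₀ (by linarith)
          have hEd := hmul' h0 hcase
          have hle : W ω * (μ[A (k+1)|ℱ k]) ω ≤ W ω * ((1 - Θ) * A k ω) :=
            mul_le_mul_of_nonneg_left hEd (hWpos ω).le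
          have h5 : W ω * ((1 - Θ) * A k ω) = 1 - Θ := by
            rw [mul_left_comm, hWA, mul_one]
          linarith
        · have hcA : max 1 (min (A k ω) (D:ℝ)) = (D:ℝ) := by
            rw [min_eq_right hcase, max_eq_right hD1]
          have hWD : W ω * (D:ℝ) = 1 := by
            simp only [hWdef]
            rw [hcA]
            exact inv_mul_cancel₀ hD0.ne'
          have hEd := hadd hcase
          have hle : W ω * (μ[A (k+1)|ℱ k]) ω ≤ W ω * (A k ω - Θ * (D:ℝ)) :=
            mul_le_mul_of_nonneg_left hEd (hWpos ω).le
          have h5 : W ω * (A k ω - Θ * (D:ℝ)) = W ω * A k ω - Θ := by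
            rw [mul_sub, mul_left_comm, hWD, mul_one]
          linarith
    have h4 : ∫ ω, (mlgP (D:ℝ) (A k ω) - W ω * A k ω + W ω * (μ[A (k+1)|ℱ k]) ω) ∂μ
        ≤ ∫ ω, (mlgP (D:ℝ) (A k ω) - Set.indicator {ω' | 0 < A k ω'} (fun _ => Θ) ω) ∂μ :=
      integral_mono_ae (((hPint k).sub hWA0).add hWE)
        ((hPint k).sub ((integrable_const Θ).indicator (hSmeas k))) hae
    have h5 : ∫ ω, (mlgP (D:ℝ) (A k ω) - Set.indicator {ω' | 0 < A k ω'} (fun _ => Θ) ω) ∂μ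
        = (∫ ω, mlgP (D:ℝ) (A k ω) ∂μ) - Θ * (μ {ω' | 0 < A k ω'}).toReal := by
      rw [integral_sub (hPint k) ((integrable_const Θ).indicator (hSmeas k)),
        integral_indicator_const Θ (hSmeas k), smul_eq_mul, measureReal_def]
      ring
    have h6 : (∫ ω, (mlgP (D:ℝ) (A k ω) - W ω * A k ω) ∂μ)
          + ∫ ω, W ω * (μ[A (k+1)|ℱ k]) ω ∂μ
        = ∫ ω, (mlgP (D:ℝ) (A k ω) - W ω * A k ω + W ω * (μ[A (k+1)|ℱ k]) ω) ∂μ :=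
      (integral_add ((hPint k).sub hWA0) hWE).symm
    linarith
  -- telescoping
  have tele : ∀ n, Θ * ∑ k ∈ Finset.range n, (μ {ω | 0 < A k ω}).toReal ≤
      (∫ ω, mlgP (D:ℝ) (A 0 ω) ∂μ) - ∫ ω, mlgP (D:ℝ) (A n ω) ∂μ := by
    intro n
    induction n with
    | zero => simp
    | succ n ih =>
      rw [Finset.sum_range_succ, mul_add]
      have hs := step n
      linarith
  have hI0 : ∫ ω, mlgP (D:ℝ) (A 0 ω) ∂μ = mlgP (D:ℝ) (a:ℝ) := by
    have he : (fun ω => mlgP (D:ℝ) (A 0 ω)) = fun _ => mlgP (D:ℝ) (a:ℝ) :=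
      funext fun ω => by rw [hA0 ω]
    rw [he, integral_const, probReal_univ, one_smul]
  have hIn : ∀ n, 0 ≤ ∫ ω, mlgP (D:ℝ) (A n ω) ∂μ :=
    fun n => integral_nonneg fun ω => mlg_P_nonneg _ _ hD1 (hA_nonneg n ω)
  have hbound : ∀ n, ∑ k ∈ Finset.range n, (μ {ω | 0 < A k ω}).toReal
      ≤ mlgP (D:ℝ) (a:ℝ) / Θ := by
    intro n
    rw [le_div_iff₀ hΘ0]
    have ht := tele n
    have hn := hIn n
    nlinarith [hI0]
  have htsum : ∑' k : ℕ, μ {ω | 0 < A k ω} ≤ ENNReal.ofReal (mlgP (D:ℝ) (a:ℝ) / Θ) := by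
    rw [ENNReal.tsum_eq_iSup_sum]
    apply iSup_le
    intro s
    obtain ⟨n, hn⟩ : ∃ n, s ⊆ Finset.range n :=
      ⟨s.sup id + 1, fun k hk => Finset.mem_range.mpr (Nat.lt_succ_of_le (Finset.le_sup (f := id) hk))⟩
    calc ∑ k ∈ s, μ {ω | 0 < A k ω} ≤ ∑ k ∈ Finset.range n, μ {ω | 0 < A k ω} :=
          Finset.sum_le_sum_of_subset hn
      _ = ENNReal.ofReal (∑ k ∈ Finset.range n, (μ {ω | 0 < A k ω}).toReal) := by
          rw [ENNReal.ofReal_sum_of_nonneg (fun i _ => ENNReal.toReal_nonneg)]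
          exact Finset.sum_congr rfl fun i _ => (ENNReal.ofReal_toReal (measure_ne_top μ _)).symm
      _ ≤ ENNReal.ofReal (mlgP (D:ℝ) (a:ℝ) / Θ) := ENNReal.ofReal_le_ofReal (hbound n)
  -- layer cake for T₀
  have hTle : ∀ ω, (T₀ ω : ℝ≥0∞) ≤
      ∑' k : ℕ, Set.indicator {ω' | 0 < A k ω'} (fun _ => (1:ℝ≥0∞)) ω := by
    intro ω
    rw [mlg_enat_coe (T₀ ω)]
    refine ENNReal.tsum_le_tsum fun k => ?_
    by_cases hk : (k:ℕ∞) < T₀ ω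
    · rw [if_pos hk]
      have hne : A k ω ≠ 0 := by
        intro h0
        have hle : T₀ ω ≤ (k:ℕ∞) := by
          rw [hT₀ ω]
          exact sInf_le ⟨k, h0, rfl⟩
        exact absurd hk (not_lt.mpr hle)
      have hmem : ω ∈ {ω' | 0 < A k ω'} := lt_of_le_of_ne (hA_nonneg k ω) (Ne.symm hne)
      rw [Set.indicator_of_mem hmem]
    · rw [if_neg hk]
      exact zero_le
  have hfinal : mlgP (D:ℝ) (a:ℝ) / Θ ≤ max ((a:ℝ) - (D:ℝ)) 0 / (Θ * (D:ℝ)) +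
      (1 + Real.log (min (D:ℝ) (max 1 (a:ℝ)))) / Θ := by
    have hswap : max 1 (min (a:ℝ) (D:ℝ)) = min (D:ℝ) (max 1 (a:ℝ)) := by
      rw [max_min_distrib_left, max_eq_right hD1, min_comm]
    have hM : max ((a:ℝ) - (D:ℝ)) 0 / (Θ * (D:ℝ)) = (max ((a:ℝ) - (D:ℝ)) 0 / (D:ℝ)) / Θ := by
      rw [div_div, mul_comm]
    rw [hM, ← add_div]
    unfold mlgP
    rw [hswap]
    refine (div_le_div_iff_of_pos_right hΘ0).mpr ?_
    linarith [min_le_right (a:ℝ) 1]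
  calc ∫⁻ ω, (T₀ ω : ℝ≥0∞) ∂μ
      ≤ ∫⁻ ω, ∑' k : ℕ, Set.indicator {ω' | 0 < A k ω'} (fun _ => (1:ℝ≥0∞)) ω ∂μ :=
        lintegral_mono hTle
    _ = ∑' k : ℕ, ∫⁻ ω, Set.indicator {ω' | 0 < A k ω'} (fun _ => (1:ℝ≥0∞)) ω ∂μ :=
        lintegral_tsum fun k => (measurable_const.indicator (hSmeas k)).aemeasurable
    _ = ∑' k : ℕ, μ {ω | 0 < A k ω} := by
        refine tsum_congr fun k => ?_
        rw [lintegral_indicator (hSmeas k), setLIntegral_const, one_mul]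
    _ ≤ ENNReal.ofReal (mlgP (D:ℝ) (a:ℝ) / Θ) := htsum
    _ ≤ _ := ENNReal.ofReal_le_ofReal hfinal
end
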